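/- A rectangle whose sides lie in ℚ(√2) can be cut into finitely many squares with sides in ℚ(√2) only if the ratio of its sides is rational. Area formulation: if 1 × (c + d√2) is tiled by squares with sides in ℚ(√2), then d = 0. -/

import Mathlib

open Set

lemma li_one_sqrt2 : LinearIndependent ℚ ![(1:ℝ), Real.sqrt 2] := by
  rw [LinearIndependent.pair_iff]
  intro s t hst
  constructor
  · by_contra hs
    by_cases ht : t = 0
    · simp [ht, Rat.smul_def] at hst; exact hs (by exact_mod_cast hst)
    · exact irrational_sqrt_two ⟨-s/t, by
        have : (s:ℝ) + t * Real.sqrt 2 = 0 := by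
          simpa [Rat.smul_def] using hst
        push_cast
        field_simp
        linarith [this]⟩
  · by_contra ht
    exact irrational_sqrt_two ⟨-s/t, by
      have : (s:ℝ) + t * Real.sqrt 2 = 0 := by simpa [Rat.smul_def] using hst
      have ht' : (t:ℝ) ≠ 0 := by exact_mod_cast ht
      push_cast
      field_simp
      linarith [this]⟩

lemma exists_phi (t : ℝ) : ∃ φ : ℝ →ₗ[ℚ] ℝ, φ 1 = 1 ∧ φ (Real.sqrt 2) = t := by
  have li := (linearIndepOn_id_range_iff li_one_sqrt2.injective).mpr li_one_sqrt2
  let B := Module.Basis.extend li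
  have h1 : (1:ℝ) ∈ li.extend (Set.subset_univ _) :=
    li.subset_extend _ ⟨0, rfl⟩
  have h2 : Real.sqrt 2 ∈ li.extend (Set.subset_univ _) :=
    li.subset_extend _ ⟨1, rfl⟩
  classical
  let g : li.extend (Set.subset_univ _) → ℝ :=
    fun v => if (v:ℝ) = Real.sqrt 2 then t else if (v:ℝ) = 1 then 1 else 0
  refine ⟨B.constr ℚ g, ?_, ?_⟩
  · have : B ⟨1, h1⟩ = (1:ℝ) := Module.Basis.extend_apply_self li ⟨1, h1⟩
    have hc := Module.Basis.constr_basis B ℚ g ⟨1, h1⟩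
    rw [this] at hc
    rw [hc]
    have hne : (1:ℝ) ≠ Real.sqrt 2 := by
      have : (1:ℝ) < Real.sqrt 2 := by
        nlinarith [Real.sq_sqrt (by norm_num : (2:ℝ) ≥ 0), Real.sqrt_nonneg 2]
      exact ne_of_lt this
    simp [g, hne]
  · have : B ⟨Real.sqrt 2, h2⟩ = Real.sqrt 2 := Module.Basis.extend_apply_self li ⟨_, h2⟩
    have hc := Module.Basis.constr_basis B ℚ g ⟨Real.sqrt 2, h2⟩
    rw [this] at hc
    rw [hc]
    simp [g]

noncomputable def enum (X : Finset ℝ) (k : ℕ) : ℝ :=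
  if h : 0 < X.card then
    ((X.orderIsoOfFin rfl ⟨min k (X.card - 1), by omega⟩ : X) : ℝ)
  else 0

lemma enum_mem (X : Finset ℝ) (hX : 0 < X.card) (k : ℕ) : enum X k ∈ X := by
  rw [enum, dif_pos hX]
  exact (X.orderIsoOfFin rfl _).2

lemma enum_mono (X : Finset ℝ) {k k' : ℕ} (h : k ≤ k') : enum X k ≤ enum X k' := by
  unfold enum
  split_ifs with hX
  · exact (X.orderIsoOfFin rfl).monotone (by simp [Fin.le_def]; omega)
  · exact le_refl _

lemma enum_strictMono (X : Finset ℝ) {k k' : ℕ} (hX : 0 < X.card) (h : k < k')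
    (h' : k' ≤ X.card - 1) : enum X k < enum X k' := by
  rw [enum, dif_pos hX, enum, dif_pos hX]
  have := (X.orderIsoOfFin rfl).strictMono (a := ⟨min k (X.card-1), by omega⟩)
    (b := ⟨min k' (X.card-1), by omega⟩) (by simp [Fin.lt_def]; omega)
  exact_mod_cast this

noncomputable def idx (X : Finset ℝ) (r : ℝ) : ℕ :=
  if h : r ∈ X then (((X.orderIsoOfFin rfl).symm ⟨r, h⟩ : Fin X.card) : ℕ) else 0

lemma idx_le (X : Finset ℝ) (r : ℝ) (h : r ∈ X) : idx X r ≤ X.card - 1 := by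
  rw [idx, dif_pos h]
  have := ((X.orderIsoOfFin rfl).symm ⟨r, h⟩).isLt
  omega

lemma enum_idx (X : Finset ℝ) (r : ℝ) (h : r ∈ X) : enum X (idx X r) = r := by
  have hX : 0 < X.card := Finset.card_pos.mpr ⟨r, h⟩
  rw [enum, dif_pos hX, idx, dif_pos h]
  have hlt := ((X.orderIsoOfFin rfl).symm ⟨r, h⟩).isLt
  have : (⟨min (((X.orderIsoOfFin rfl).symm ⟨r, h⟩ : Fin X.card) : ℕ) (X.card - 1), by omega⟩ : Fin X.card)
      = (X.orderIsoOfFin rfl).symm ⟨r, h⟩ := by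
    apply Fin.ext; simp; omega
  rw [this]
  simp

set_option maxHeartbeats 1000000 in
theorem dehn_key (φ : ℝ →ₗ[ℚ] ℝ) (n : ℕ) (p q s : Fin n → ℝ) (W H : ℝ)
    (hs : ∀ i, 0 < s i) (hW : 0 < W) (hH : 0 < H)
    (hcover : (⋃ i, Set.Icc (p i) (p i + s i) ×ˢ Set.Icc (q i) (q i + s i))
        = Set.Icc 0 W ×ˢ Set.Icc 0 H)
    (hdisj : ∀ i j, i ≠ j → Disjoint
        (Set.Ioo (p i) (p i + s i) ×ˢ Set.Ioo (q i) (q i + s i))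
        (Set.Ioo (p j) (p j + s j) ×ˢ Set.Ioo (q j) (q j + s j))) :
    φ W * φ H = ∑ i, φ (s i) * φ (s i) := by
  classical
  have hsub : ∀ i, Set.Icc (p i) (p i + s i) ×ˢ Set.Icc (q i) (q i + s i) ⊆
      Set.Icc (0:ℝ) W ×ˢ Set.Icc (0:ℝ) H := by
    intro i
    rw [← hcover]
    exact Set.subset_iUnion (fun i => Set.Icc (p i) (p i + s i) ×ˢ Set.Icc (q i) (q i + s i)) i
  have hbound : ∀ i, 0 ≤ p i ∧ p i + s i ≤ W ∧ 0 ≤ q i ∧ q i + s i ≤ H := by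
    intro i
    have h1 : ((p i, q i) : ℝ × ℝ) ∈ Set.Icc (0:ℝ) W ×ˢ Set.Icc (0:ℝ) H := by
      apply hsub i
      simp only [Set.mem_prod, Set.mem_Icc]
      refine ⟨⟨le_refl _, ?_⟩, le_refl _, ?_⟩ <;> linarith [hs i]
    have h2 : ((p i + s i, q i + s i) : ℝ × ℝ) ∈ Set.Icc (0:ℝ) W ×ˢ Set.Icc (0:ℝ) H := by
      apply hsub i
      simp only [Set.mem_prod, Set.mem_Icc]
      refine ⟨⟨?_, le_refl _⟩, ?_, le_refl _⟩ <;> linarith [hs i]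
    simp only [Set.mem_prod, Set.mem_Icc] at h1 h2
    exact ⟨h1.1.1, h2.1.2, h1.2.1, h2.2.2⟩
  have npos : 0 < n := by
    have h0 : ((0:ℝ), (0:ℝ)) ∈ Set.Icc (0:ℝ) W ×ˢ Set.Icc (0:ℝ) H := by
      simp only [Set.mem_prod, Set.mem_Icc]
      exact ⟨⟨le_refl _, hW.le⟩, le_refl _, hH.le⟩
    rw [← hcover] at h0
    obtain ⟨_, ⟨i, rfl⟩, _⟩ := h0
    exact i.pos
  set X : Finset ℝ := insert 0 (insert W
    ((Finset.univ.image p) ∪ (Finset.univ.image fun i => p i + s i))) with hXdef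
  set Y : Finset ℝ := insert 0 (insert H
    ((Finset.univ.image q) ∪ (Finset.univ.image fun i => q i + s i))) with hYdef
  have h0X : (0:ℝ) ∈ X := by simp [hXdef]
  have hWX : W ∈ X := by simp [hXdef]
  have hpX : ∀ i, p i ∈ X := fun i => by simp [hXdef]
  have hpsX : ∀ i, p i + s i ∈ X := fun i => by simp [hXdef]
  have h0Y : (0:ℝ) ∈ Y := by simp [hYdef]
  have hHY : H ∈ Y := by simp [hYdef]
  have hqY : ∀ i, q i ∈ Y := fun i => by simp [hYdef]
  have hqsY : ∀ i, q i + s i ∈ Y := fun i => by simp [hYdef]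
  have hXrange : ∀ r ∈ X, 0 ≤ r ∧ r ≤ W := by
    intro r hr
    simp [hXdef] at hr
    rcases hr with rfl | rfl | ⟨i, rfl⟩ | ⟨i, rfl⟩
    · exact ⟨le_refl _, hW.le⟩
    · exact ⟨hW.le, le_refl _⟩
    · obtain ⟨a1, a2, _, _⟩ := hbound i; exact ⟨a1, by linarith [hs i]⟩
    · obtain ⟨a1, a2, _, _⟩ := hbound i; exact ⟨by linarith [hs i], a2⟩
  have hYrange : ∀ r ∈ Y, 0 ≤ r ∧ r ≤ H := by
    intro r hr
    simp [hYdef] at hr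
    rcases hr with rfl | rfl | ⟨i, rfl⟩ | ⟨i, rfl⟩
    · exact ⟨le_refl _, hH.le⟩
    · exact ⟨hH.le, le_refl _⟩
    · obtain ⟨_, _, a1, a2⟩ := hbound i; exact ⟨a1, by linarith [hs i]⟩
    · obtain ⟨_, _, a1, a2⟩ := hbound i; exact ⟨by linarith [hs i], a2⟩
  have hXc : 0 < X.card := Finset.card_pos.mpr ⟨0, h0X⟩
  have hYc : 0 < Y.card := Finset.card_pos.mpr ⟨0, h0Y⟩
  set m := X.card with hm
  set m' := Y.card with hm'
  set x : ℕ → ℝ := enum X with hxdef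
  set y : ℕ → ℝ := enum Y with hydef
  -- x-typed wrappers
  have hxmono : ∀ {k k' : ℕ}, k ≤ k' → x k ≤ x k' := fun h => enum_mono X h
  have hymono : ∀ {k k' : ℕ}, k ≤ k' → y k ≤ y k' := fun h => enum_mono Y h
  have hxsm : ∀ {k k' : ℕ}, k < k' → k' ≤ m - 1 → x k < x k' :=
    fun h h' => enum_strictMono X hXc h h'
  have hysm : ∀ {k k' : ℕ}, k < k' → k' ≤ m' - 1 → y k < y k' :=
    fun h h' => enum_strictMono Y hYc h h'
  have hxmem : ∀ k, x k ∈ X := fun k => enum_mem X hXc k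
  have hymem : ∀ k, y k ∈ Y := fun k => enum_mem Y hYc k
  have hxidx : ∀ r, r ∈ X → x (idx X r) = r := fun r hr => enum_idx X r hr
  have hyidx : ∀ r, r ∈ Y → y (idx Y r) = r := fun r hr => enum_idx Y r hr
  have hxile : ∀ r, r ∈ X → idx X r ≤ m - 1 := fun r hr => idx_le X r hr
  have hyile : ∀ r, r ∈ Y → idx Y r ≤ m' - 1 := fun r hr => idx_le Y r hr
  -- endpoints
  have hx0 : x 0 = 0 := by
    have h1 : 0 ≤ x 0 := (hXrange _ (hxmem 0)).1
    have h2 : x 0 ≤ x (idx X 0) := hxmono (Nat.zero_le _)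
    rw [hxidx 0 h0X] at h2
    linarith
  have hxtop : x (m - 1) = W := by
    have h1 : x (m-1) ≤ W := (hXrange _ (hxmem (m-1))).2
    have h2 : x (idx X W) ≤ x (m - 1) := hxmono (hxile W hWX)
    rw [hxidx W hWX] at h2
    linarith
  have hy0 : y 0 = 0 := by
    have h1 : 0 ≤ y 0 := (hYrange _ (hymem 0)).1
    have h2 : y 0 ≤ y (idx Y 0) := hymono (Nat.zero_le _)
    rw [hyidx 0 h0Y] at h2
    linarith
  have hytop : y (m' - 1) = H := by
    have h1 : y (m'-1) ≤ H := (hYrange _ (hymem (m'-1))).2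
    have h2 : y (idx Y H) ≤ y (m' - 1) := hymono (hyile H hHY)
    rw [hyidx H hHY] at h2
    linarith
  -- "no grid point strictly between consecutive ones"
  have hxle : ∀ r, r ∈ X → ∀ k : ℕ, r < x (k+1) → r ≤ x k := by
    intro r hr k h
    rw [← hxidx r hr] at h ⊢
    by_contra hc
    push_neg at hc
    have hk : k + 1 ≤ idx X r := by
      by_contra hk
      exact absurd (hxmono (show idx X r ≤ k by omega)) (not_le.mpr hc)
    exact absurd (hxmono hk) (not_le.mpr h)
  have hxge : ∀ r, r ∈ X → ∀ k : ℕ, x k < r → x (k+1) ≤ r := by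
    intro r hr k h
    rw [← hxidx r hr] at h ⊢
    have hk : k + 1 ≤ idx X r := by
      by_contra hk
      exact absurd (hxmono (show idx X r ≤ k by omega)) (not_le.mpr h)
    exact hxmono hk
  have hyle : ∀ r, r ∈ Y → ∀ k : ℕ, r < y (k+1) → r ≤ y k := by
    intro r hr k h
    rw [← hyidx r hr] at h ⊢
    by_contra hc
    push_neg at hc
    have hk : k + 1 ≤ idx Y r := by
      by_contra hk
      exact absurd (hymono (show idx Y r ≤ k by omega)) (not_le.mpr hc)
    exact absurd (hymono hk) (not_le.mpr h)
  have hyge : ∀ r, r ∈ Y → ∀ k : ℕ, y k < r → y (k+1) ≤ r := by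
    intro r hr k h
    rw [← hyidx r hr] at h ⊢
    have hk : k + 1 ≤ idx Y r := by
      by_contra hk
      exact absurd (hymono (show idx Y r ≤ k by omega)) (not_le.mpr h)
    exact hymono hk
  -- centers
  set cx : ℕ → ℝ := fun k => (x k + x (k+1)) / 2 with hcxdef
  set cy : ℕ → ℝ := fun l => (y l + y (l+1)) / 2 with hcydef
  have hcxval : ∀ k, cx k = (x k + x (k+1)) / 2 := fun k => rfl
  have hcyval : ∀ l, cy l = (y l + y (l+1)) / 2 := fun l => rfl
  have hcxmem : ∀ k, k < m - 1 → x k < cx k ∧ cx k < x (k+1) ∧ 0 ≤ cx k ∧ cx k ≤ W := by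
    intro k hk
    have h1 : x k < x (k+1) := hxsm (Nat.lt_succ_self k) (by omega)
    have h2 : x 0 ≤ x k := hxmono (Nat.zero_le _)
    have h3 : x (k+1) ≤ x (m-1) := hxmono (by omega)
    rw [hx0] at h2; rw [hxtop] at h3
    rw [hcxval]
    refine ⟨by linarith, by linarith, by linarith, by linarith⟩
  have hcymem : ∀ l, l < m' - 1 → y l < cy l ∧ cy l < y (l+1) ∧ 0 ≤ cy l ∧ cy l ≤ H := by
    intro l hl
    have h1 : y l < y (l+1) := hysm (Nat.lt_succ_self l) (by omega)
    have h2 : y 0 ≤ y l := hymono (Nat.zero_le _)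
    have h3 : y (l+1) ≤ y (m'-1) := hymono (by omega)
    rw [hy0] at h2; rw [hytop] at h3
    rw [hcyval]
    refine ⟨by linarith, by linarith, by linarith, by linarith⟩
  have hcent : ∀ k l, k < m - 1 → l < m' - 1 →
      ∃ i, ((cx k, cy l) : ℝ × ℝ) ∈ Set.Icc (p i) (p i + s i) ×ˢ Set.Icc (q i) (q i + s i) := by
    intro k l hk hl
    have hmem : ((cx k, cy l) : ℝ × ℝ) ∈ Set.Icc (0:ℝ) W ×ˢ Set.Icc (0:ℝ) H := by
      obtain ⟨_, _, a1, a2⟩ := hcxmem k hk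
      obtain ⟨_, _, b1, b2⟩ := hcymem l hl
      exact ⟨⟨a1, a2⟩, ⟨b1, b2⟩⟩
    rw [← hcover] at hmem
    exact Set.mem_iUnion.mp hmem
  set A : ℕ → ℕ → Fin n := fun k l =>
    if h : ∃ i, ((cx k, cy l) : ℝ × ℝ) ∈ Set.Icc (p i) (p i + s i) ×ˢ Set.Icc (q i) (q i + s i)
    then h.choose else ⟨0, npos⟩ with hA
  have hAmem : ∀ k l, k < m - 1 → l < m' - 1 →
      ((cx k, cy l) : ℝ × ℝ) ∈ Set.Icc (p (A k l)) (p (A k l) + s (A k l)) ×ˢ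
        Set.Icc (q (A k l)) (q (A k l) + s (A k l)) := by
    intro k l hk hl
    have h := hcent k l hk hl
    simp only [hA, dif_pos h]
    exact h.choose_spec
  have hbox : ∀ k l (i : Fin n), k < m - 1 → l < m' - 1 →
      ((cx k, cy l) : ℝ × ℝ) ∈ Set.Icc (p i) (p i + s i) ×ˢ Set.Icc (q i) (q i + s i) →
      p i ≤ x k ∧ x (k+1) ≤ p i + s i ∧ q i ≤ y l ∧ y (l+1) ≤ q i + s i := by
    intro k l i hk hl hmem
    obtain ⟨⟨e1, e2⟩, ⟨e3, e4⟩⟩ := hmem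
    obtain ⟨c1, c2, _, _⟩ := hcxmem k hk
    obtain ⟨d1, d2, _, _⟩ := hcymem l hl
    refine ⟨?_, ?_, ?_, ?_⟩
    · exact hxle _ (hpX i) k (by linarith)
    · exact hxge _ (hpsX i) k (by linarith)
    · exact hyle _ (hqY i) l (by linarith)
    · exact hyge _ (hqsY i) l (by linarith)
  have hAiff : ∀ k l (i : Fin n), k < m - 1 → l < m' - 1 →
      (A k l = i ↔ p i ≤ x k ∧ x (k+1) ≤ p i + s i ∧ q i ≤ y l ∧ y (l+1) ≤ q i + s i) := by
    intro k l i hk hl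
    constructor
    · rintro rfl
      exact hbox k l _ hk hl (hAmem k l hk hl)
    · rintro ⟨e1, e2, e3, e4⟩
      obtain ⟨f1, f2, f3, f4⟩ := hbox k l _ hk hl (hAmem k l hk hl)
      obtain ⟨c1, c2, _, _⟩ := hcxmem k hk
      obtain ⟨d1, d2, _, _⟩ := hcymem l hl
      by_contra hne
      have memj : ((cx k, cy l) : ℝ × ℝ) ∈
          Set.Ioo (p (A k l)) (p (A k l) + s (A k l)) ×ˢ
            Set.Ioo (q (A k l)) (q (A k l) + s (A k l)) :=
        ⟨⟨by linarith, by linarith⟩, ⟨by linarith, by linarith⟩⟩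
      have memi : ((cx k, cy l) : ℝ × ℝ) ∈
          Set.Ioo (p i) (p i + s i) ×ˢ Set.Ioo (q i) (q i + s i) :=
        ⟨⟨by linarith, by linarith⟩, ⟨by linarith, by linarith⟩⟩
      exact Set.disjoint_left.mp (hdisj _ _ hne) memj memi
  set F : ℕ → ℝ := fun k => φ (x k) with hF
  set G : ℕ → ℝ := fun l => φ (y l) with hG
  have hFval : ∀ k, F k = φ (x k) := fun k => rfl
  have hGval : ∀ l, G l = φ (y l) := fun l => rfl
  have htelX : ∀ k1 k2 : ℕ, k1 ≤ k2 →
      ∑ k ∈ Finset.Ico k1 k2, (F (k+1) - F k) = F k2 - F k1 := by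
    intro k1 k2 h12
    rw [Finset.sum_Ico_eq_sub _ h12, Finset.sum_range_sub, Finset.sum_range_sub]
    ring
  have htelY : ∀ l1 l2 : ℕ, l1 ≤ l2 →
      ∑ l ∈ Finset.Ico l1 l2, (G (l+1) - G l) = G l2 - G l1 := by
    intro l1 l2 h12
    rw [Finset.sum_Ico_eq_sub _ h12, Finset.sum_range_sub, Finset.sum_range_sub]
    ring
  have hS1 : ∑ c ∈ (Finset.range (m-1)) ×ˢ (Finset.range (m'-1)),
      (F (c.1+1) - F c.1) * (G (c.2+1) - G c.2) = φ W * φ H := by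
    rw [Finset.sum_product]
    have hinner : ∀ k, ∑ l ∈ Finset.range (m'-1), (F (k+1) - F k) * (G (l+1) - G l)
        = (F (k+1) - F k) * (G (m'-1) - G 0) := by
      intro k
      rw [← Finset.mul_sum, Finset.sum_range_sub]
    simp_rw [hinner]
    rw [← Finset.sum_mul, Finset.sum_range_sub]
    have hF0 : F 0 = 0 := by rw [hFval, hx0, map_zero]
    have hG0 : G 0 = 0 := by rw [hGval, hy0, map_zero]
    have hFt : F (m-1) = φ W := by rw [hFval, hxtop]
    have hGt : G (m'-1) = φ H := by rw [hGval, hytop]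
    rw [hF0, hG0, hFt, hGt]
    ring
  have hS2 : ∑ c ∈ (Finset.range (m-1)) ×ˢ (Finset.range (m'-1)),
      (F (c.1+1) - F c.1) * (G (c.2+1) - G c.2) = ∑ i, φ (s i) * φ (s i) := by
    rw [← Finset.sum_fiberwise ((Finset.range (m-1)) ×ˢ (Finset.range (m'-1)))
      (fun c => A c.1 c.2) (fun c => (F (c.1+1) - F c.1) * (G (c.2+1) - G c.2))]
    apply Finset.sum_congr rfl
    intro i _
    have hk12 : idx X (p i) ≤ idx X (p i + s i) := by
      by_contra hc
      push_neg at hc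
      have h1 : x (idx X (p i + s i)) < x (idx X (p i)) := hxsm hc (hxile _ (hpX i))
      rw [hxidx _ (hpX i), hxidx _ (hpsX i)] at h1
      linarith [hs i]
    have hl12 : idx Y (q i) ≤ idx Y (q i + s i) := by
      by_contra hc
      push_neg at hc
      have h1 : y (idx Y (q i + s i)) < y (idx Y (q i)) := hysm hc (hyile _ (hqY i))
      rw [hyidx _ (hqY i), hyidx _ (hqsY i)] at h1
      linarith [hs i]
    have hfilter : Finset.filter (fun c => A c.1 c.2 = i)
        ((Finset.range (m-1)) ×ˢ (Finset.range (m'-1)))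
        = (Finset.Ico (idx X (p i)) (idx X (p i + s i))) ×ˢ
          (Finset.Ico (idx Y (q i)) (idx Y (q i + s i))) := by
      ext c
      simp only [Finset.mem_filter, Finset.mem_product, Finset.mem_range, Finset.mem_Ico]
      have hiX1 := hxile _ (hpX i)
      have hiX2 := hxile _ (hpsX i)
      have hiY1 := hyile _ (hqY i)
      have hiY2 := hyile _ (hqsY i)
      constructor
      · rintro ⟨⟨hk, hl⟩, hAc⟩
        obtain ⟨e1, e2, e3, e4⟩ := (hAiff c.1 c.2 i hk hl).mp hAc
        refine ⟨⟨?_, ?_⟩, ?_, ?_⟩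
        · by_contra hc'
          push_neg at hc'
          have h1 : x c.1 < x (idx X (p i)) := hxsm hc' hiX1
          rw [hxidx _ (hpX i)] at h1
          linarith
        · by_contra hc'
          push_neg at hc'
          have h1 : x (idx X (p i + s i)) ≤ x c.1 := hxmono (by omega)
          rw [hxidx _ (hpsX i)] at h1
          have h2 : x c.1 < x (c.1+1) := hxsm (Nat.lt_succ_self _) (by omega)
          linarith
        · by_contra hc'
          push_neg at hc'
          have h1 : y c.2 < y (idx Y (q i)) := hysm hc' hiY1
          rw [hyidx _ (hqY i)] at h1
          linarith
        · by_contra hc'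
          push_neg at hc'
          have h1 : y (idx Y (q i + s i)) ≤ y c.2 := hymono (by omega)
          rw [hyidx _ (hqsY i)] at h1
          have h2 : y c.2 < y (c.2+1) := hysm (Nat.lt_succ_self _) (by omega)
          linarith
      · rintro ⟨⟨e1, e2⟩, e3, e4⟩
        have hkm : c.1 < m - 1 := by omega
        have hlm : c.2 < m' - 1 := by omega
        refine ⟨⟨hkm, hlm⟩, ?_⟩
        rw [hAiff c.1 c.2 i hkm hlm]
        refine ⟨?_, ?_, ?_, ?_⟩
        · have h1 : x (idx X (p i)) ≤ x c.1 := hxmono e1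
          rw [hxidx _ (hpX i)] at h1
          exact h1
        · have h1 : x (c.1 + 1) ≤ x (idx X (p i + s i)) := hxmono (by omega)
          rw [hxidx _ (hpsX i)] at h1
          exact h1
        · have h1 : y (idx Y (q i)) ≤ y c.2 := hymono e3
          rw [hyidx _ (hqY i)] at h1
          exact h1
        · have h1 : y (c.2 + 1) ≤ y (idx Y (q i + s i)) := hymono (by omega)
          rw [hyidx _ (hqsY i)] at h1
          exact h1
    rw [hfilter, Finset.sum_product]
    have hinner : ∀ k, ∑ l ∈ Finset.Ico (idx Y (q i)) (idx Y (q i + s i)),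
        (F (k+1) - F k) * (G (l+1) - G l)
        = (F (k+1) - F k) * (G (idx Y (q i + s i)) - G (idx Y (q i))) := by
      intro k
      rw [← Finset.mul_sum, htelY _ _ hl12]
    simp_rw [hinner]
    rw [← Finset.sum_mul, htelX _ _ hk12]
    have hFd : F (idx X (p i + s i)) - F (idx X (p i)) = φ (s i) := by
      rw [hFval, hFval, hxidx _ (hpsX i), hxidx _ (hpX i), ← map_sub]
      congr 1
      ring
    have hGd : G (idx Y (q i + s i)) - G (idx Y (q i)) = φ (s i) := by
      rw [hGval, hGval, hyidx _ (hqsY i), hyidx _ (hqY i), ← map_sub]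
      congr 1
      ring
    rw [hFd, hGd]
  rw [← hS1, hS2]

/-- Dehn's theorem for ℚ(√2): if the rectangle 1 × (c + d√2) is tiled by finitely
many axis-aligned squares whose side lengths lie in ℚ(√2), then d = 0 (i.e. the
ratio of the sides of the rectangle is rational). -/
theorem dehn_Q_sqrt_two
    (c d : ℚ) (hpos : 0 < (c : ℝ) + (d : ℝ) * Real.sqrt 2)
    (h : ∃ (n : ℕ) (p q : Fin n → ℝ) (a b : Fin n → ℚ),
      (∀ i, 0 < (a i : ℝ) + (b i : ℝ) * Real.sqrt 2) ∧
      (⋃ i, Set.Icc (p i) (p i + ((a i : ℝ) + (b i : ℝ) * Real.sqrt 2)) ×ˢ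
            Set.Icc (q i) (q i + ((a i : ℝ) + (b i : ℝ) * Real.sqrt 2)))
        = Set.Icc (0 : ℝ) 1 ×ˢ Set.Icc (0 : ℝ) ((c : ℝ) + (d : ℝ) * Real.sqrt 2) ∧
      (∀ i j, i ≠ j →
        Disjoint
          (Set.Ioo (p i) (p i + ((a i : ℝ) + (b i : ℝ) * Real.sqrt 2)) ×ˢ
           Set.Ioo (q i) (q i + ((a i : ℝ) + (b i : ℝ) * Real.sqrt 2)))
          (Set.Ioo (p j) (p j + ((a j : ℝ) + (b j : ℝ) * Real.sqrt 2)) ×ˢ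
           Set.Ioo (q j) (q j + ((a j : ℝ) + (b j : ℝ) * Real.sqrt 2))))) :
    d = 0 := by
  by_contra hd
  obtain ⟨n, p, q, a, b, hside, hcover, hdisj⟩ := h
  obtain ⟨φ, hφ1, hφ2⟩ := exists_phi ((-1 - (c:ℝ)) / (d:ℝ))
  have key := dehn_key φ n p q (fun i => (a i : ℝ) + (b i : ℝ) * Real.sqrt 2) 1
    ((c:ℝ) + (d:ℝ) * Real.sqrt 2) hside one_pos hpos hcover hdisj
  have hd' : (d:ℝ) ≠ 0 := by exact_mod_cast hd
  have hφH : φ ((c:ℝ) + (d:ℝ) * Real.sqrt 2) = -1 := by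
    have heq : ((c:ℝ) + (d:ℝ) * Real.sqrt 2) = (c:ℚ) • (1:ℝ) + (d:ℚ) • Real.sqrt 2 := by
      simp [Rat.smul_def]
    rw [heq, map_add, map_smul, map_smul, hφ1, hφ2, Rat.smul_def, Rat.smul_def]
    field_simp
    ring
  have hnn : (0:ℝ) ≤ ∑ i, φ ((a i : ℝ) + (b i : ℝ) * Real.sqrt 2) *
      φ ((a i : ℝ) + (b i : ℝ) * Real.sqrt 2) :=
    Finset.sum_nonneg fun i _ => mul_self_nonneg _
  rw [hφ1, hφH] at key
  rw [← key] at hnn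
  linarith
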